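/- The Kulkarni group K_g = ⟨a,b | a^{2g+2} = b^4 = (ab)^2 = 1, b^2 a b^2 = a^{g+2}⟩ has order 8g+8 for every g ≡ 3 (mod 4). -/

import Mathlib

/-- The relators of the Kulkarni group
`K_g = ⟨a, b | a^(2g+2) = b^4 = (ab)^2 = 1, b²ab² = a^(g+2)⟩`,
as elements of the free group on two generators (`0` is `a`, `1` is `b`). -/
def kRels (g : ℕ) : Set (FreeGroup (Fin 2)) :=
  { (FreeGroup.of 0) ^ (2 * g + 2),
    (FreeGroup.of 1) ^ 4,
    (FreeGroup.of 0 * FreeGroup.of 1) ^ 2,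
    (FreeGroup.of 1) ^ 2 * FreeGroup.of 0 * (FreeGroup.of 1) ^ 2 *
      ((FreeGroup.of 0) ^ (g + 2))⁻¹ }

namespace Kulkarni

/-- The state space: a set of size `(8k+8) * 4` on which the group acts. -/
abbrev M (k : ℕ) := ZMod (8 * k + 8) × ZMod 4

/-- Parity ring homomorphism on `ZMod (8k+8)`. -/
def par (k : ℕ) : ZMod (8 * k + 8) →+* ZMod 2 :=
  ZMod.castHom (show 2 ∣ 8 * k + 8 from ⟨4 * k + 4, by ring⟩) (ZMod 2)

/-- `s = 2k+3`. -/
def sk (k : ℕ) : ZMod (8 * k + 8) := 2 * (k : ZMod (8 * k + 8)) + 3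

lemma hcast0 (k : ℕ) : 8 * (k : ZMod (8 * k + 8)) + 8 = 0 := by
  have h := ZMod.natCast_self (8 * k + 8)
  push_cast at h
  linear_combination h

lemma two_sk_sq (k : ℕ) : 2 * sk k ^ 2 = 2 := by
  unfold sk
  linear_combination ((k : ZMod (8 * k + 8)) + 2) * hcast0 k

lemma par_natCast (k m : ℕ) : par k ((m : ℕ) : ZMod (8 * k + 8)) = (m : ZMod 2) :=
  map_natCast (par k) m

lemma par_sk (k : ℕ) : par k (sk k) = 1 := by
  have hs : sk k = ((2 * k + 3 : ℕ) : ZMod (8 * k + 8)) := by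
    unfold sk; push_cast; ring
  rw [hs, par_natCast]
  have h2 : (2 : ZMod 2) = 0 := rfl
  push_cast
  linear_combination ((k : ZMod 2) + 1) * h2

lemma par_tk (k : ℕ) : par k (sk k - 1) = 0 := by
  rw [map_sub, par_sk, map_one, sub_self]

lemma sq_even {k : ℕ} {i : ZMod (8 * k + 8)} (h : par k i = 0) :
    sk k ^ 2 * i = i := by
  have hval : ((i.val : ℕ) : ZMod 2) = 0 := by
    have : ((i.val : ℕ) : ZMod (8 * k + 8)) = i := by
      rw [ZMod.natCast_val, ZMod.cast_id]
    rw [← par_natCast k i.val, this, h]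
  obtain ⟨m, hm⟩ : 2 ∣ i.val := (ZMod.natCast_eq_zero_iff _ 2).mp hval
  have hi : i = 2 * ((m : ℕ) : ZMod (8 * k + 8)) := by
    rw [show ((2 : ℕ) * m : ℕ) = 2 * m from rfl] at hm
    have : ((i.val : ℕ) : ZMod (8 * k + 8)) = i := by
      rw [ZMod.natCast_val, ZMod.cast_id]
    rw [← this, hm]
    push_cast
    ring
  rw [hi]
  linear_combination ((m : ZMod (8 * k + 8))) * two_sk_sq k

lemma sq_odd {k : ℕ} {i : ZMod (8 * k + 8)} (h : par k i = 1) :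
    sk k ^ 2 * i = i + (sk k ^ 2 - 1) := by
  have h0 : par k (i - 1) = 0 := by rw [map_sub, h, map_one, sub_self]
  have := sq_even h0
  linear_combination this

lemma par_cases (x : ZMod 2) : x = 0 ∨ x = 1 := by revert x; decide

/-- The permutation corresponding to `a` (left multiplication). -/
def eA (k : ℕ) : Equiv.Perm (M k) :=
  ⟨fun p => (p.1 + 1, p.2), fun p => (p.1 - 1, p.2),
    fun p => by simp, fun p => by simp⟩

/-- The function underlying the permutation corresponding to `b`. -/
def fB (k : ℕ) (p : M k) : M k :=
  if par k p.1 = 0 then (-sk k * p.1, p.2 + 1)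
  else (-sk k * p.1 + (sk k - 1), p.2 + 3)

lemma fB_even {k : ℕ} {p : M k} (h : par k p.1 = 0) :
    fB k p = (-sk k * p.1, p.2 + 1) := by unfold fB; rw [h]; simp

lemma fB_odd {k : ℕ} {p : M k} (h : par k p.1 = 1) :
    fB k p = (-sk k * p.1 + (sk k - 1), p.2 + 3) := by
  unfold fB; rw [h]; simp

lemma fB_fB_even {k : ℕ} {p : M k} (h : par k p.1 = 0) :
    fB k (fB k p) = (p.1, p.2 + 2) := by
  rw [fB_even h]
  have h1 : par k (-sk k * p.1) = 0 := by
    rw [map_mul, map_neg, par_sk]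
    have hneg : ∀ x : ZMod 2, -x = x := by decide
    rw [hneg, one_mul, h]
  rw [fB_even h1]
  have hsq := sq_even h
  have h4 : ∀ j : ZMod 4, j + 1 + 1 = j + 2 := by decide
  refine Prod.ext ?_ (h4 p.2)
  show -sk k * (-sk k * p.1) = p.1
  linear_combination hsq

lemma fB_fB_odd {k : ℕ} {p : M k} (h : par k p.1 = 1) :
    fB k (fB k p) = (p.1 + (4 * (k : ZMod (8 * k + 8)) + 4), p.2 + 2) := by
  rw [fB_odd h]
  have hneg : ∀ x : ZMod 2, -x = x := by decide
  have h1 : par k (-sk k * p.1 + (sk k - 1)) = 1 := by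
    rw [map_add, map_mul, map_neg, par_sk, par_tk, hneg, one_mul, h, add_zero]
  rw [fB_odd h1]
  have hsq := sq_odd h
  have h4 : ∀ j : ZMod 4, j + 3 + 3 = j + 2 := by decide
  refine Prod.ext ?_ (h4 p.2)
  show -sk k * (-sk k * p.1 + (sk k - 1)) + (sk k - 1)
      = p.1 + (4 * (k : ZMod (8 * k + 8)) + 4)
  have hs : sk k = 2 * (k : ZMod (8 * k + 8)) + 3 := rfl
  linear_combination hsq + 2 * hs

lemma par_shift (k : ℕ) (i : ZMod (8 * k + 8)) :
    par k (i + (4 * (k : ZMod (8 * k + 8)) + 4)) = par k i := by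
  have h : par k (4 * (k : ZMod (8 * k + 8)) + 4) = 0 := by
    have h4 : 4 * (k : ZMod (8 * k + 8)) + 4 = ((4 * k + 4 : ℕ) : ZMod (8 * k + 8)) := by
      push_cast; ring
    rw [h4, par_natCast]
    have h2 : (2 : ZMod 2) = 0 := rfl
    push_cast
    linear_combination (2 * (k : ZMod 2) + 2) * h2
  rw [map_add, h, add_zero]

lemma fB4 (k : ℕ) (p : M k) : fB k (fB k (fB k (fB k p))) = p := by
  have h44 : ∀ j : ZMod 4, j + 2 + 2 = j := by decide
  rcases par_cases (par k p.1) with h | h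
  · rw [fB_fB_even h, fB_fB_even (by simpa using h)]
    exact Prod.ext rfl (h44 p.2)
  · rw [fB_fB_odd h]
    have h2 : par k (p.1 + (4 * (k : ZMod (8 * k + 8)) + 4)) = 1 := by
      rw [par_shift, h]
    rw [fB_fB_odd h2]
    refine Prod.ext ?_ (h44 p.2)
    show p.1 + (4 * (k : ZMod (8 * k + 8)) + 4) + (4 * (k : ZMod (8 * k + 8)) + 4) = p.1
    linear_combination hcast0 k

/-- The permutation corresponding to `b`. -/
def eB (k : ℕ) : Equiv.Perm (M k) :=
  ⟨fB k, fB k ∘ fB k ∘ fB k, fun p => fB4 k p, fun p => fB4 k p⟩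

lemma par_add_one (k : ℕ) (i : ZMod (8 * k + 8)) : par k (i + 1) = par k i + 1 := by
  rw [map_add, map_one]

lemma eA_pow (k m : ℕ) (p : M k) :
    (eA k ^ m) p = (p.1 + (m : ZMod (8 * k + 8)), p.2) := by
  induction m with
  | zero => simp
  | succ m ih =>
    rw [pow_succ', Equiv.Perm.mul_apply, ih]
    have h1 : eA k (p.1 + (m : ZMod (8 * k + 8)), p.2)
        = (p.1 + (m : ZMod (8 * k + 8)) + 1, p.2) := rfl
    rw [h1]
    refine Prod.ext ?_ rfl
    show p.1 + (m : ZMod (8 * k + 8)) + 1 = p.1 + ((m : ℕ) + 1 : ℕ)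
    push_cast
    ring

lemma relA (k : ℕ) : eA k ^ (8 * k + 8) = 1 := by
  refine Equiv.ext fun p => ?_
  rw [eA_pow]
  show (p.1 + ((8 * k + 8 : ℕ) : ZMod (8 * k + 8)), p.2) = p
  rw [ZMod.natCast_self, add_zero]

lemma relB (k : ℕ) : eB k ^ 4 = 1 := by
  refine Equiv.ext fun p => ?_
  show (eB k ^ 4) p = p
  simp only [pow_succ, pow_zero, one_mul, Equiv.Perm.mul_apply]
  exact fB4 k p

lemma relAB (k : ℕ) : (eA k * eB k) ^ 2 = 1 := by
  refine Equiv.ext fun p => ?_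
  obtain ⟨i, j⟩ := p
  show (((eA k * eB k) ^ 2) (i, j)) = (i, j)
  simp only [pow_succ, pow_zero, one_mul, Equiv.Perm.mul_apply]
  have hneg : ∀ x : ZMod 2, -x = x := by decide
  rcases par_cases (par k i) with h | h
  · have e1 : eB k (i, j) = (-sk k * i, j + 1) := fB_even h
    rw [e1]
    have e2 : eA k (-sk k * i, j + 1) = (-sk k * i + 1, j + 1) := rfl
    rw [e2]
    have h1 : par k (-sk k * i + 1) = 1 := by
      rw [par_add_one, map_mul, map_neg, par_sk, hneg, one_mul, h, zero_add]
    have e3 : eB k (-sk k * i + 1, j + 1)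
        = (-sk k * (-sk k * i + 1) + (sk k - 1), j + 1 + 3) := fB_odd h1
    rw [e3]
    have e4 : eA k (-sk k * (-sk k * i + 1) + (sk k - 1), j + 1 + 3)
        = (-sk k * (-sk k * i + 1) + (sk k - 1) + 1, j + 1 + 3) := rfl
    rw [e4]
    have h4 : j + 1 + 3 = j := by
      have h' : ∀ x : ZMod 4, x + 1 + 3 = x := by decide
      exact h' j
    refine Prod.ext ?_ h4
    show -sk k * (-sk k * i + 1) + (sk k - 1) + 1 = i
    linear_combination sq_even h
  · have e1 : eB k (i, j) = (-sk k * i + (sk k - 1), j + 3) := fB_odd h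
    rw [e1]
    have e2 : eA k (-sk k * i + (sk k - 1), j + 3)
        = (-sk k * i + (sk k - 1) + 1, j + 3) := rfl
    rw [e2]
    have h1 : par k (-sk k * i + (sk k - 1) + 1) = 0 := by
      rw [par_add_one, map_add, map_mul, map_neg, par_sk, map_sub, par_sk, map_one,
        hneg, one_mul, h]
      decide
    have e3 : eB k (-sk k * i + (sk k - 1) + 1, j + 3)
        = (-sk k * (-sk k * i + (sk k - 1) + 1), j + 3 + 1) := fB_even h1
    rw [e3]
    have e4 : eA k (-sk k * (-sk k * i + (sk k - 1) + 1), j + 3 + 1)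
        = (-sk k * (-sk k * i + (sk k - 1) + 1) + 1, j + 3 + 1) := rfl
    rw [e4]
    have h4 : j + 3 + 1 = j := by
      have h' : ∀ x : ZMod 4, x + 3 + 1 = x := by decide
      exact h' j
    refine Prod.ext ?_ h4
    show -sk k * (-sk k * i + (sk k - 1) + 1) + 1 = i
    linear_combination sq_odd h

lemma relCon (k : ℕ) : eB k ^ 2 * eA k * eB k ^ 2 = eA k ^ (4 * k + 5) := by
  refine Equiv.ext fun p => ?_
  obtain ⟨i, j⟩ := p
  show (eB k ^ 2 * eA k * eB k ^ 2) (i, j) = (eA k ^ (4 * k + 5)) (i, j)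
  rw [eA_pow]
  simp only [pow_succ, pow_zero, one_mul, Equiv.Perm.mul_apply]
  rcases par_cases (par k i) with h | h
  · have c1 : eB k (eB k (i, j)) = (i, j + 2) := fB_fB_even h
    rw [c1]
    have c2 : eA k (i, j + 2) = (i + 1, j + 2) := rfl
    rw [c2]
    have h1 : par k (i + 1) = 1 := by rw [par_add_one, h, zero_add]
    have c3 : eB k (eB k (i + 1, j + 2))
        = (i + 1 + (4 * (k : ZMod (8 * k + 8)) + 4), j + 2 + 2) := fB_fB_odd h1
    rw [c3]
    have h4 : j + 2 + 2 = j := by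
      have h' : ∀ x : ZMod 4, x + 2 + 2 = x := by decide
      exact h' j
    refine Prod.ext ?_ h4
    show i + 1 + (4 * (k : ZMod (8 * k + 8)) + 4) = i + ((4 * k + 5 : ℕ) : ZMod (8 * k + 8))
    push_cast
    ring
  · have c1 : eB k (eB k (i, j)) = (i + (4 * (k : ZMod (8 * k + 8)) + 4), j + 2) :=
      fB_fB_odd h
    rw [c1]
    have c2 : eA k (i + (4 * (k : ZMod (8 * k + 8)) + 4), j + 2)
        = (i + (4 * (k : ZMod (8 * k + 8)) + 4) + 1, j + 2) := rfl
    rw [c2]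
    have h1 : par k (i + (4 * (k : ZMod (8 * k + 8)) + 4) + 1) = 0 := by
      rw [par_add_one, par_shift, h]
      decide
    have c3 : eB k (eB k (i + (4 * (k : ZMod (8 * k + 8)) + 4) + 1, j + 2))
        = (i + (4 * (k : ZMod (8 * k + 8)) + 4) + 1, j + 2 + 2) := fB_fB_even h1
    rw [c3]
    have h4 : j + 2 + 2 = j := by
      have h' : ∀ x : ZMod 4, x + 2 + 2 = x := by decide
      exact h' j
    refine Prod.ext ?_ h4
    show i + (4 * (k : ZMod (8 * k + 8)) + 4) + 1 = i + ((4 * k + 5 : ℕ) : ZMod (8 * k + 8))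
    push_cast
    ring

/-- The generator assignment. -/
def fg (k : ℕ) : Fin 2 → Equiv.Perm (M k) := ![eA k, eB k]

lemma fg0 (k : ℕ) : fg k 0 = eA k := rfl

lemma fg1 (k : ℕ) : fg k 1 = eB k := rfl

lemma hrels (k : ℕ) : ∀ r ∈ kRels (4 * k + 3), FreeGroup.lift (fg k) r = 1 := by
  intro r hr
  simp only [kRels, Set.mem_insert_iff, Set.mem_singleton_iff] at hr
  rcases hr with rfl | rfl | rfl | rfl
  · rw [map_pow, FreeGroup.lift_apply_of, fg0, show 2 * (4 * k + 3) + 2 = 8 * k + 8 by omega]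
    exact relA k
  · rw [map_pow, FreeGroup.lift_apply_of, fg1]
    exact relB k
  · rw [map_pow, map_mul, FreeGroup.lift_apply_of, FreeGroup.lift_apply_of, fg0, fg1]
    exact relAB k
  · simp only [map_mul, map_pow, map_inv, FreeGroup.lift_apply_of, fg0, fg1]
    rw [show 4 * k + 3 + 2 = 4 * k + 5 by omega, mul_inv_eq_one]
    exact relCon k

lemma eB_pow_basept (k m : ℕ) (j : ZMod 4) :
    (eB k ^ m) ((0 : ZMod (8 * k + 8)), j) = (0, j + (m : ZMod 4)) := by
  induction m with
  | zero => simp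
  | succ m ih =>
    rw [pow_succ', Equiv.Perm.mul_apply, ih]
    have h0 : par k (0 : ZMod (8 * k + 8)) = 0 := map_zero _
    have h1 : eB k ((0 : ZMod (8 * k + 8)), j + (m : ZMod 4)) = (0, j + (m : ZMod 4) + 1) := by
      show fB k ((0 : ZMod (8 * k + 8)), j + (m : ZMod 4)) = (0, j + (m : ZMod 4) + 1)
      rw [fB_even h0]
      refine Prod.ext ?_ rfl
      show -sk k * 0 = 0
      ring
    rw [h1]
    refine Prod.ext rfl ?_
    show j + (m : ZMod 4) + 1 = j + ((m : ℕ) + 1 : ℕ)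
    push_cast
    ring

lemma pow_val_key {G : Type*} [Group G] {m : ℕ} [NeZero m] {x : G} (hx : x ^ m = 1)
    (i : ZMod m) (c : ℕ) : x ^ (i + (c : ZMod m)).val = x ^ i.val * x ^ c := by
  have h1 : (i + (c : ZMod m)).val = (i.val + c) % m := by
    have h2 : ((i.val + c : ℕ) : ZMod m) = i + (c : ZMod m) := by
      push_cast
      rw [ZMod.natCast_val, ZMod.cast_id]
    rw [← h2, ZMod.val_natCast]
  rw [h1]
  conv_rhs => rw [← pow_add, ← Nat.div_add_mod (i.val + c) m]
  rw [pow_add, pow_mul, hx, one_pow, one_mul]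

end Kulkarni

open Kulkarni in
/-- The Kulkarni group `K_g` has order `8g + 8` for every `g ≡ 3 (mod 4)`. -/
theorem kulkarni_group_card (g : ℕ) (hg : g % 4 = 3) :
    Nat.card (PresentedGroup (kRels g)) = 8 * g + 8 := by
  obtain ⟨k, rfl⟩ : ∃ k, g = 4 * k + 3 := ⟨g / 4, by omega⟩
  haveI : NeZero (8 * k + 8) := ⟨by omega⟩
  haveI : NeZero (4 : ℕ) := ⟨by omega⟩
  let a : PresentedGroup (kRels (4 * k + 3)) := PresentedGroup.of 0
  let b : PresentedGroup (kRels (4 * k + 3)) := PresentedGroup.of 1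
  have hrel : ∀ r ∈ kRels (4 * k + 3), (PresentedGroup.mk (kRels (4 * k + 3)) r) = 1 :=
    fun r hr => (QuotientGroup.eq_one_iff r).mpr (Subgroup.subset_normalClosure hr)
  have ha : a ^ (8 * k + 8) = 1 := by
    have h := hrel _ (Or.inl rfl)
    rw [map_pow] at h
    rw [show 8 * k + 8 = 2 * (4 * k + 3) + 2 by omega]
    exact h
  have hb : b ^ 4 = 1 := by
    have h := hrel _ (Or.inr (Or.inl rfl))
    rw [map_pow] at h
    exact h
  have hab : (a * b) ^ 2 = 1 := by
    have h := hrel _ (Or.inr (Or.inr (Or.inl rfl)))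
    rw [map_pow, map_mul] at h
    exact h
  have hcon : b ^ 2 * a * b ^ 2 = a ^ (4 * k + 5) := by
    have h := hrel _ (Or.inr (Or.inr (Or.inr rfl)))
    simp only [map_mul, map_pow, map_inv] at h
    rw [mul_inv_eq_one] at h
    rw [show 4 * k + 5 = 4 * k + 3 + 2 by omega]
    exact h
  have hainv : a⁻¹ = a ^ (8 * k + 7) := by
    apply inv_eq_of_mul_eq_one_right
    rw [← pow_succ']
    rw [show 8 * k + 7 + 1 = 8 * k + 8 by omega]
    exact ha
  have hbinv : b⁻¹ = b ^ 3 := by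
    apply inv_eq_of_mul_eq_one_right
    rw [← pow_succ']
    exact hb
  have hba : b * a = a ^ (8 * k + 7) * b ^ 3 := by
    have h1 : b * a = a⁻¹ * ((a * b) * (a * b)) * b⁻¹ := by group
    rw [← pow_two, hab, mul_one, hainv, hbinv] at h1
    exact h1
  have hb2inv : (b ^ 2)⁻¹ = b ^ 2 := by
    apply inv_eq_of_mul_eq_one_right
    rw [← pow_add]
    exact hb
  have hb2a : b ^ 2 * a = a ^ (4 * k + 5) * b ^ 2 := by
    have h1 : b ^ 2 * a = (b ^ 2 * a * b ^ 2) * (b ^ 2)⁻¹ := by group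
    rw [hcon, hb2inv] at h1
    exact h1
  have hb2apow : ∀ m : ℕ, b ^ 2 * a ^ m = a ^ ((4 * k + 5) * m) * b ^ 2 := by
    intro m
    induction m with
    | zero => simp
    | succ m ih =>
      rw [pow_succ a m, ← mul_assoc, ih, mul_assoc, hb2a, ← mul_assoc, ← pow_add,
        show (4 * k + 5) * m + (4 * k + 5) = (4 * k + 5) * (m + 1) by ring]
  have hb3a : b ^ 3 * a = a ^ (4 * k + 3) * b := by
    have h1 : b ^ 3 * a = b ^ 2 * (b * a) := by group
    rw [hba, ← mul_assoc, hb2apow, mul_assoc, ← pow_add,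
      show (4 * k + 5) * (8 * k + 7) = (8 * k + 8) * (4 * k + 4) + (4 * k + 3) by ring,
      pow_add, pow_mul, ha, one_pow, one_mul] at h1
    rw [h1]
    congr 1
    rw [show (2 : ℕ) + 3 = 4 + 1 by omega, pow_add, hb, one_mul, pow_one]
  -- the normal-form parametrization
  let F : M k → PresentedGroup (kRels (4 * k + 3)) := fun p => a ^ p.1.val * b ^ p.2.val
  have hFdef : ∀ p : M k, F p = a ^ p.1.val * b ^ p.2.val := fun p => rfl
  -- the homomorphism to permutations
  let φ : PresentedGroup (kRels (4 * k + 3)) →* Equiv.Perm (M k) :=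
    PresentedGroup.toGroup (Kulkarni.hrels k)
  have hφa : φ a = eA k := PresentedGroup.toGroup.of (Kulkarni.hrels k)
  have hφb : φ b = eB k := PresentedGroup.toGroup.of (Kulkarni.hrels k)
  -- injectivity
  have hFinj : Function.Injective F := by
    intro p q hpq
    have h1 := congrArg φ hpq
    rw [hFdef, hFdef, map_mul, map_mul, map_pow, map_pow, map_pow, map_pow,
      hφa, hφb] at h1
    have h2 : (eA k ^ p.1.val * eB k ^ p.2.val) ((0 : ZMod (8 * k + 8)), (0 : ZMod 4))
        = (eA k ^ q.1.val * eB k ^ q.2.val) ((0 : ZMod (8 * k + 8)), (0 : ZMod 4)) := by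
      rw [h1]
    rw [Equiv.Perm.mul_apply, Equiv.Perm.mul_apply, eB_pow_basept, eB_pow_basept,
      eA_pow, eA_pow] at h2
    simp only [zero_add, Prod.mk.injEq] at h2
    obtain ⟨h3, h4⟩ := h2
    have h5 : p.1 = q.1 := by
      rwa [ZMod.natCast_val, ZMod.cast_id, ZMod.natCast_val, ZMod.cast_id] at h3
    have h6 : p.2 = q.2 := by
      rwa [ZMod.natCast_val, ZMod.cast_id, ZMod.natCast_val, ZMod.cast_id] at h4
    exact Prod.ext h5 h6
  -- one step of right multiplication by a
  have hstepA : ∀ p : M k, ∃ q : M k, F q = F p * a := by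
    rintro ⟨i, j⟩
    have hj : j.val = 0 ∨ j.val = 1 ∨ j.val = 2 ∨ j.val = 3 := by
      have := ZMod.val_lt j
      omega
    rcases hj with hj | hj | hj | hj
    · refine ⟨(i + ((1 : ℕ) : ZMod (8 * k + 8)), j), ?_⟩
      show a ^ (i + ((1 : ℕ) : ZMod (8 * k + 8))).val * b ^ j.val
          = a ^ i.val * b ^ j.val * a
      rw [hj, pow_zero, mul_one, mul_one, Kulkarni.pow_val_key ha, pow_one]
    · refine ⟨(i + ((8 * k + 7 : ℕ) : ZMod (8 * k + 8)), (3 : ZMod 4)), ?_⟩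
      show a ^ (i + ((8 * k + 7 : ℕ) : ZMod (8 * k + 8))).val * b ^ (3 : ZMod 4).val
          = a ^ i.val * b ^ j.val * a
      rw [hj, pow_one, show (3 : ZMod 4).val = 3 from rfl, Kulkarni.pow_val_key ha,
        mul_assoc, ← hba, ← mul_assoc]
    · refine ⟨(i + ((4 * k + 5 : ℕ) : ZMod (8 * k + 8)), (2 : ZMod 4)), ?_⟩
      show a ^ (i + ((4 * k + 5 : ℕ) : ZMod (8 * k + 8))).val * b ^ (2 : ZMod 4).val
          = a ^ i.val * b ^ j.val * a
      rw [hj, show (2 : ZMod 4).val = 2 from rfl, Kulkarni.pow_val_key ha,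
        mul_assoc, ← hb2a, ← mul_assoc]
    · refine ⟨(i + ((4 * k + 3 : ℕ) : ZMod (8 * k + 8)), (1 : ZMod 4)), ?_⟩
      show a ^ (i + ((4 * k + 3 : ℕ) : ZMod (8 * k + 8))).val * b ^ (1 : ZMod 4).val
          = a ^ i.val * b ^ j.val * a
      rw [hj, show (1 : ZMod 4).val = 1 from rfl, Kulkarni.pow_val_key ha, pow_one,
        mul_assoc, ← hb3a, ← mul_assoc]
  -- one step of right multiplication by b
  have hstepB : ∀ p : M k, ∃ q : M k, F q = F p * b := by
    rintro ⟨i, j⟩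
    refine ⟨(i, j + ((1 : ℕ) : ZMod 4)), ?_⟩
    show a ^ i.val * b ^ (j + ((1 : ℕ) : ZMod 4)).val = a ^ i.val * b ^ j.val * b
    rw [Kulkarni.pow_val_key hb, pow_one, mul_assoc]
  have hstepApow : ∀ (m : ℕ) (p : M k), ∃ q : M k, F q = F p * a ^ m := by
    intro m
    induction m with
    | zero => exact fun p => ⟨p, by rw [pow_zero, mul_one]⟩
    | succ m ih =>
      intro p
      obtain ⟨q, hq⟩ := ih p
      obtain ⟨r, hr⟩ := hstepA q
      exact ⟨r, by rw [hr, hq, pow_succ, mul_assoc]⟩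
  have hstepBpow : ∀ (m : ℕ) (p : M k), ∃ q : M k, F q = F p * b ^ m := by
    intro m
    induction m with
    | zero => exact fun p => ⟨p, by rw [pow_zero, mul_one]⟩
    | succ m ih =>
      intro p
      obtain ⟨q, hq⟩ := ih p
      obtain ⟨r, hr⟩ := hstepB q
      exact ⟨r, by rw [hr, hq, pow_succ, mul_assoc]⟩
  -- surjectivity
  have hFsurj : Function.Surjective F := by
    have main : ∀ w : FreeGroup (Fin 2), ∀ p : M k,
        ∃ q : M k, F q = F p * PresentedGroup.mk (kRels (4 * k + 3)) w := by
      intro w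
      induction w using FreeGroup.induction_on with
      | C1 => exact fun p => ⟨p, by rw [map_one, mul_one]⟩
      | of x =>
        intro p
        fin_cases x
        · exact hstepA p
        · exact hstepB p
      | inv_of x _ =>
        intro p
        fin_cases x
        · obtain ⟨q, hq⟩ := hstepApow (8 * k + 7) p
          refine ⟨q, ?_⟩
          rw [map_inv]
          show F q = F p * a⁻¹
          rw [hainv, hq]
        · obtain ⟨q, hq⟩ := hstepBpow 3 p
          refine ⟨q, ?_⟩
          rw [map_inv]
          show F q = F p * b⁻¹
          rw [hbinv, hq]
      | mul x y ihx ihy =>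
        intro p
        obtain ⟨q, hq⟩ := ihx p
        obtain ⟨r, hr⟩ := ihy q
        exact ⟨r, by rw [hr, hq, map_mul, mul_assoc]⟩
    intro x
    obtain ⟨w, rfl⟩ := PresentedGroup.mk_surjective (kRels (4 * k + 3)) x
    obtain ⟨q, hq⟩ := main w ((0 : ZMod (8 * k + 8)), (0 : ZMod 4))
    refine ⟨q, ?_⟩
    rw [hq, hFdef]
    simp [ZMod.val_zero]
  have hcard := Nat.card_eq_of_bijective F ⟨hFinj, hFsurj⟩
  rw [← hcard, Nat.card_prod, Nat.card_zmod, Nat.card_zmod]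
  omega
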